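/- If G is a König–Egerváry graph, then the family of maximum critical independent sets of G equals the family of maximum independent sets of G; in particular, the nucleus of G (the intersection of all maximum critical independent sets) equals the core of G (the intersection of all maximum independent sets). -/

import Mathlib

open Finset

variable {V : Type*} [Fintype V] [DecidableEq V] (G : SimpleGraph V) [DecidableRel G.Adj]

/-- `N(S)`: the set of vertices adjacent to some vertex of `S`. -/
def nbhd (S : Finset V) : Finset V := S.biUnion (fun v => G.neighborFinset v)

/-- `S` is an independent set of `G`. -/
def Indep (S : Finset V) : Prop := ∀ u ∈ S, ∀ v ∈ S, ¬ G.Adj u v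

/-- The difference `d_G(S) = |S| - |N(S)|`. -/
def diffI (S : Finset V) : ℤ := (S.card : ℤ) - ((nbhd G S).card : ℤ)

/-- `S` is a maximum independent set of `G`. -/
def IsMaxIndep (S : Finset V) : Prop :=
  Indep G S ∧ ∀ T : Finset V, Indep G T → T.card ≤ S.card

/-- `I` is a critical independent set of `G`. -/
def IsCritIndep (I : Finset V) : Prop :=
  Indep G I ∧ ∀ J : Finset V, Indep G J → diffI G J ≤ diffI G I

/-- `I` is a maximum critical independent set of `G`. -/
def IsMaxCritIndep (I : Finset V) : Prop :=
  IsCritIndep G I ∧ ∀ J : Finset V, IsCritIndep G J → J.card ≤ I.card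

/-- `core(G)`: intersection of all maximum independent sets. -/
def core : Set V := {v | ∀ S : Finset V, IsMaxIndep G S → v ∈ S}

/-- `corona(G)`: union of all maximum independent sets. -/
def corona : Set V := {v | ∃ S : Finset V, IsMaxIndep G S ∧ v ∈ S}

/-- `nucleus(G)`: intersection of all maximum critical independent sets. -/
def nucleus : Set V := {v | ∀ S : Finset V, IsMaxCritIndep G S → v ∈ S}

/-- `diadem(G)`: union of all maximum critical independent sets. -/
def diadem : Set V := {v | ∃ S : Finset V, IsMaxCritIndep G S ∧ v ∈ S}

/-- `ker(G)`: intersection of all critical independent sets. -/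
def kerS : Set V := {v | ∀ S : Finset V, IsCritIndep G S → v ∈ S}

/-- A matching of `G`, given as an involution of the vertex set:
unmatched vertices are fixed points, matched vertices are sent to their partner. -/
def IsMatching (M : V → V) : Prop :=
  Function.Involutive M ∧ ∀ v, M v ≠ v → G.Adj v (M v)

/-- Twice the number of edges of the matching `M`, i.e. the number of matched vertices. -/
def matchSize (M : V → V) : ℕ := (univ.filter fun v => M v ≠ v).card

/-- `M` is a maximum matching of `G`. -/
def IsMaxMatching (M : V → V) : Prop :=
  IsMatching G M ∧ ∀ M' : V → V, IsMatching G M' → matchSize M' ≤ matchSize M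

/-- `M` is a matching of the induced subgraph `G[L]`. -/
def IsMatchingOn (L : Finset V) (M : V → V) : Prop :=
  IsMatching G M ∧ ∀ v, M v ≠ v → v ∈ L

/-- `M` is a maximum matching of the induced subgraph `G[L]`. -/
def IsMaxMatchingOn (L : Finset V) (M : V → V) : Prop :=
  IsMatchingOn G L M ∧ ∀ M' : V → V, IsMatchingOn G L M' → matchSize M' ≤ matchSize M

/-- `S` is a maximum independent set of the induced subgraph `G[L]`. -/
def IsMaxIndepOn (L : Finset V) (S : Finset V) : Prop :=
  S ⊆ L ∧ Indep G S ∧ ∀ T : Finset V, T ⊆ L → Indep G T → T.card ≤ S.card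

/-- `core` of the induced subgraph `G[L]`. -/
def coreOn (L : Finset V) : Set V := {v | ∀ S : Finset V, IsMaxIndepOn G L S → v ∈ S}

/-- `D(G[L])`: vertices of `L` missed by some maximum matching of `G[L]`. -/
def Dset (L : Finset V) : Set V := {v | v ∈ L ∧ ∃ M : V → V, IsMaxMatchingOn G L M ∧ M v = v}

/-- The Larson boundary `∂_L(G)` of the set `L`. -/
def boundaryL (L : Finset V) : Set V := {v | v ∈ L ∧ ∃ w, w ∉ L ∧ G.Adj v w}

/-- The critical difference `d(G)`. -/
noncomputable def critDiff : ℤ := sSup {d : ℤ | ∃ X : Finset V, diffI G X = d}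

/-- The difference of `S` computed in the induced subgraph `G[L]`. -/
def diffOn (L : Finset V) (S : Finset V) : ℤ := (S.card : ℤ) - ((nbhd G S ∩ L).card : ℤ)

/-- The critical difference of the induced subgraph `G[L]`. -/
noncomputable def critDiffOn (L : Finset V) : ℤ := sSup {d : ℤ | ∃ X : Finset V, X ⊆ L ∧ diffOn G L X = d}

/-- `G` is a König–Egerváry graph: `α(G) + μ(G) = |V(G)|`. -/
def KonigEgervary : Prop :=
  ∃ (S : Finset V) (M : V → V), IsMaxIndep G S ∧ IsMaxMatching G M ∧
    2 * S.card + matchSize M = 2 * Fintype.card V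
lemma mem_nbhd_of_adj {u v : V} {S : Finset V} (hu : u ∈ S) (h : G.Adj u v) :
    v ∈ nbhd G S := by
  simp only [nbhd, Finset.mem_biUnion, SimpleGraph.mem_neighborFinset]
  exact ⟨u, hu, h⟩

lemma matchSize_le_aux {J : Finset V} {M : V → V} (hJ : Indep G J) (hM : IsMatching G M) :
    matchSize M ≤ (nbhd G J).card + (Fintype.card V - J.card) := by
  classical
  set A : Finset V := univ.filter (fun v => M v ≠ v) with hA
  have h1 : (A ∩ J).card ≤ (nbhd G J).card := by
    apply Finset.card_le_card_of_injOn M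
    · intro v (hv : v ∈ A ∩ J)
      simp only [hA, Finset.mem_inter, Finset.mem_filter, Finset.mem_univ, true_and] at hv
      exact mem_nbhd_of_adj G hv.2 (hM.2 v hv.1)
    · exact fun a _ b _ hab => hM.1.injective hab
  have h2 : (A \ J).card ≤ Fintype.card V - J.card := by
    have : A \ J ⊆ Jᶜ := by
      intro v hv
      rw [Finset.mem_sdiff] at hv
      simpa using hv.2
    calc (A \ J).card ≤ Jᶜ.card := Finset.card_le_card this
      _ = Fintype.card V - J.card := Finset.card_compl J
  have h3 : (A ∩ J).card + (A \ J).card = A.card := Finset.card_inter_add_card_sdiff A J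
  have : matchSize M = A.card := rfl
  omega

lemma maxIndep_nbhd_card {S : Finset V} (hS : IsMaxIndep G S) :
    (nbhd G S).card = Fintype.card V - S.card := by
  classical
  have hdisj : ∀ v ∈ S, v ∉ nbhd G S := by
    intro v hv hvN
    simp only [nbhd, Finset.mem_biUnion, SimpleGraph.mem_neighborFinset] at hvN
    obtain ⟨u, hu, hadj⟩ := hvN
    exact hS.1 u hu v hv hadj
  have hcover : ∀ v, v ∉ S → v ∈ nbhd G S := by
    intro v hvS
    by_contra hvN
    have hind : Indep G (insert v S) := by
      intro a ha b hb hab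
      rw [Finset.mem_insert] at ha hb
      rcases ha with ha | ha
      · subst ha
        rcases hb with hb | hb
        · subst hb; exact G.irrefl hab
        · exact hvN (mem_nbhd_of_adj G hb hab.symm)
      · rcases hb with hb | hb
        · subst hb; exact hvN (mem_nbhd_of_adj G ha hab)
        · exact hS.1 a ha b hb hab
    have := hS.2 _ hind
    rw [Finset.card_insert_of_notMem hvS] at this
    omega
  have : nbhd G S = Sᶜ := by
    ext v
    simp only [Finset.mem_compl]
    constructor
    · intro hv hvS; exact hdisj v hvS hv
    · exact hcover v
  rw [this, Finset.card_compl]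

theorem stmt5 (h : KonigEgervary G) :
    (∀ S : Finset V, IsMaxCritIndep G S ↔ IsMaxIndep G S) ∧ nucleus G = core G := by
  classical
  obtain ⟨S₀, M₀, hS₀, hM₀, heq⟩ := h
  have hS₀card : S₀.card ≤ Fintype.card V := Finset.card_le_univ _
  have hdS₀ : diffI G S₀ = 2 * (S₀.card : ℤ) - Fintype.card V := by
    unfold diffI
    rw [maxIndep_nbhd_card G hS₀]
    omega
  have hcrit : ∀ J : Finset V, Indep G J → diffI G J ≤ diffI G S₀ := by
    intro J hJ
    have h1 := matchSize_le_aux G hJ hM₀.1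
    have hJcard : J.card ≤ Fintype.card V := Finset.card_le_univ _
    rw [hdS₀]
    unfold diffI
    omega
  have hiff : ∀ S : Finset V, IsMaxCritIndep G S ↔ IsMaxIndep G S := by
    intro S
    constructor
    · rintro ⟨⟨hind, hmax⟩, hmaxc⟩
      refine ⟨hind, fun T hT => ?_⟩
      have hS₀crit : IsCritIndep G S₀ := ⟨hS₀.1, hcrit⟩
      have h1 : S₀.card ≤ S.card := hmaxc S₀ hS₀crit
      have h2 : T.card ≤ S₀.card := hS₀.2 T hT
      omega
    · rintro ⟨hind, hmax⟩
      have hScard : S.card = S₀.card :=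
        le_antisymm (hS₀.2 S hind) (hmax S₀ hS₀.1)
      have hdS : diffI G S = diffI G S₀ := by
        have hc : S.card ≤ Fintype.card V := Finset.card_le_univ _
        have := maxIndep_nbhd_card G (⟨hind, hmax⟩ : IsMaxIndep G S)
        rw [hdS₀]
        unfold diffI
        rw [this]
        omega
      refine ⟨⟨hind, fun J hJ => ?_⟩, fun J hJ => hmax J hJ.1⟩
      rw [hdS]; exact hcrit J hJ
  refine ⟨hiff, ?_⟩
  ext v
  simp only [nucleus, core, Set.mem_setOf_eq]
  constructor
  · intro hv S hS; exact hv S ((hiff S).mpr hS)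
  · intro hv S hS; exact hv S ((hiff S).mp hS)
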